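/- arXiv:1709.08263 — 2 statements merged into one kernel-verified Lean document; each statement's English description precedes it below -/
import Mathlib

section
/- Let ℓ : ℂ → ℝ be convex with ℓ(0) = 0. Then for any a, b ∈ ℂ, any m > 1 and any ε with 0 < ε < 1/m, setting C_ε = 1/(ε(m−1)), one has |ℓ(a+b) − ℓ(a)| ≤ ε[ℓ(ma) − m ℓ(a)] + |ℓ(C_ε b)| + |ℓ(−C_ε b)|. -/
private lemma three_pt (ℓ : ℂ → ℝ) (hconv : ConvexOn ℝ Set.univ ℓ)
    (x y z : ℂ) (p q r : ℝ) (hp : 0 ≤ p) (hq : 0 ≤ q) (hr : 0 ≤ r)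
    (hsum : p + q + r = 1) :
    ℓ ((p : ℂ) * x + (q : ℂ) * y + (r : ℂ) * z) ≤ p * ℓ x + q * ℓ y + r * ℓ z := by
  have := hconv.map_sum_le (t := Finset.univ) (w := ![p, q, r]) (p := ![x, y, z])
    (by intro i _; fin_cases i <;> simpa) (by simp [Fin.sum_univ_three, hsum])
    (by intro i _; trivial)
  simpa [Fin.sum_univ_three, Complex.real_smul] using this

/-- The Brezis–Lieb convexity lemma: for convex `ℓ : ℂ → ℝ` with `ℓ 0 = 0`,
`|ℓ(a+b) − ℓ(a)| ≤ ε[ℓ(ma) − m ℓ(a)] + |ℓ(C_ε b)| + |ℓ(−C_ε b)|`,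
where `C_ε = 1/(ε(m−1))`. -/
theorem stmt5 (ℓ : ℂ → ℝ) (hconv : ConvexOn ℝ Set.univ ℓ) (h0 : ℓ 0 = 0)
    (a b : ℂ) (m ε : ℝ) (hm : 1 < m) (hε : 0 < ε) (hεm : ε < 1 / m) :
    |ℓ (a + b) - ℓ a| ≤
      ε * (ℓ ((m : ℂ) * a) - m * ℓ a)
      + |ℓ (((1 / (ε * (m - 1)) : ℝ) : ℂ) * b)|
      + |ℓ (-((1 / (ε * (m - 1)) : ℝ) : ℂ) * b)| := by
  set C : ℝ := 1 / (ε * (m - 1)) with hC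
  have hm0 : 0 < m := lt_trans one_pos hm
  have hεm1 : ε * m < 1 := by
    have := (lt_div_iff₀ hm0).mp hεm; linarith
  have hs : 0 < ε * (m - 1) := mul_pos hε (by linarith)
  have hs1 : ε * (m - 1) < 1 := by nlinarith
  have hsC : (ε * (m - 1)) * C = 1 := by
    rw [hC]; exact mul_one_div_cancel hs.ne'
  -- first inequality
  have h1 : ℓ (a + b) - ℓ a ≤ ε * (ℓ ((m : ℂ) * a) - m * ℓ a) + (ε * (m - 1)) * ℓ ((C : ℂ) * b) := by
    have key := three_pt ℓ hconv ((m : ℂ) * a) ((C : ℂ) * b) a ε (ε * (m - 1)) (1 - ε * m)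
      hε.le hs.le (by linarith) (by ring)
    have heq : (ε : ℂ) * ((m : ℂ) * a) + ((ε * (m - 1) : ℝ) : ℂ) * ((C : ℂ) * b)
        + ((1 - ε * m : ℝ) : ℂ) * a = a + b := by
      have : ((ε * (m - 1) : ℝ) : ℂ) * (C : ℂ) = 1 := by
        rw [← Complex.ofReal_mul, hsC]; norm_num
      push_cast
      push_cast at this
      linear_combination b * this + a * (Complex.ofReal_one ▸ rfl : ((1:ℝ):ℂ) = 1) * 0
    rw [heq] at key
    linarith
  -- second inequality
  have h2 : ℓ a - ℓ (a + b) ≤ ε * (ℓ ((m : ℂ) * a) - m * ℓ a) + (ε * (m - 1)) * ℓ (-(C : ℂ) * b) := by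
    set D : ℝ := 1 + ε * m with hD
    have hD0 : 0 < D := by positivity
    have key := three_pt ℓ hconv (a + b) ((m : ℂ) * a) (-(C : ℂ) * b)
      (1 / D) (ε / D) (ε * (m - 1) / D)
      (by positivity) (by positivity) (by positivity)
      (by field_simp; ring)
    have heq : ((1 / D : ℝ) : ℂ) * (a + b) + ((ε / D : ℝ) : ℂ) * ((m : ℂ) * a)
        + ((ε * (m - 1) / D : ℝ) : ℂ) * (-(C : ℂ) * b) = a := by
      have h1' : ((ε * (m - 1) : ℝ) : ℂ) * (C : ℂ) = 1 := by
        rw [← Complex.ofReal_mul, hsC]; norm_num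
      have hDne : (D : ℂ) ≠ 0 := by
        simpa using Complex.ofReal_ne_zero.mpr (ne_of_gt hD0)
      have hDne' : (1:ℂ) + (ε:ℂ) * (m:ℂ) ≠ 0 := by
        have := hDne; rw [hD] at this; push_cast at this; convert this using 2
      simp only [hD]
      push_cast
      field_simp [hDne']
      push_cast at h1'
      linear_combination (-b) * h1' * ((1:ℂ) + (ε:ℂ) * (m:ℂ)) + b * (ε:ℂ) * (m:ℂ) * h1'
    rw [heq] at key
    have : D * ℓ a ≤ ℓ (a + b) + ε * ℓ ((m : ℂ) * a) + (ε * (m - 1)) * ℓ (-(C : ℂ) * b) := by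
      have := mul_le_mul_of_nonneg_left key hD0.le
      calc D * ℓ a ≤ D * (1 / D * ℓ (a + b) + ε / D * ℓ ((m:ℂ)*a) + ε*(m-1)/D * ℓ (-(C:ℂ)*b)) := this
        _ = _ := by field_simp
    rw [hD] at this; linarith
  -- combine
  have hb1 : (ε * (m - 1)) * ℓ ((C : ℂ) * b) ≤ |ℓ ((C : ℂ) * b)| := by
    calc (ε * (m - 1)) * ℓ ((C : ℂ) * b) ≤ (ε * (m - 1)) * |ℓ ((C : ℂ) * b)| :=
          mul_le_mul_of_nonneg_left (le_abs_self _) hs.le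
      _ ≤ 1 * |ℓ ((C : ℂ) * b)| := mul_le_mul_of_nonneg_right hs1.le (abs_nonneg _)
      _ = _ := one_mul _
  have hb2 : (ε * (m - 1)) * ℓ (-(C : ℂ) * b) ≤ |ℓ (-(C : ℂ) * b)| := by
    calc (ε * (m - 1)) * ℓ (-(C : ℂ) * b) ≤ (ε * (m - 1)) * |ℓ (-(C : ℂ) * b)| :=
          mul_le_mul_of_nonneg_left (le_abs_self _) hs.le
      _ ≤ 1 * |ℓ (-(C : ℂ) * b)| := mul_le_mul_of_nonneg_right hs1.le (abs_nonneg _)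
      _ = _ := one_mul _
  rw [abs_sub_le_iff]
  constructor
  · have := abs_nonneg (ℓ (-(C : ℂ) * b))
    linarith
  · have := abs_nonneg (ℓ ((C : ℂ) * b))
    linarith
end

section
/- Let 1 < p < q < ∞ and let V be a normed space embedded in L^q. Define the Nehari set N = {u ∈ V \ {0} : ‖u‖_V^p = ∫|u|^q}, d = inf{ (1/p)‖u‖_V^p − (1/q)∫|u|^q : u ∈ N }, and for ρ > 0 the constrained minimum T_ρ = inf{ ‖u‖_V^p : u ∈ V, ∫|u|^q = ρ }. If φ ∈ N attains d (i.e. (1/p)‖φ‖_V^p − (1/q)∫|φ|^q = d), then φ is a minimizer of T_{ρ₀} for ρ₀ = ∫|φ|^q: that is, ‖φ‖_V^p = T_{ρ₀}. -/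
open MeasureTheory

/-- Lemma 5.9 (abstracted): if `φ` lies on the Nehari set
`N = {u ≠ 0 : ‖u‖_V^p = ∫|u|^q}` and attains the least energy level
`d = inf_N [(1/p)‖u‖_V^p − (1/q)∫|u|^q]`, then `φ` minimizes `‖u‖_V^p` among
all `u` with `∫|u|^q = ∫|φ|^q`, i.e. `‖φ‖_V^p = T_{ρ₀}` for `ρ₀ = ∫|φ|^q`. -/
theorem stmt16 {X : Type*} [MeasurableSpace X] (μm : Measure X) (p q : ℝ)
    (hp : 1 < p) (hpq : p < q) [Fact (1 ≤ ENNReal.ofReal q)]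
    {V : Type*} [NormedAddCommGroup V] [NormedSpace ℝ V]
    (ιq : V →L[ℝ] Lp ℝ (ENNReal.ofReal q) μm)
    (d : ℝ) (φ : V) (hφ : φ ≠ 0)
    (hNehari : ‖φ‖ ^ p = ∫ x, |ιq φ x| ^ q ∂μm)
    (hφd : (1 / p) * ‖φ‖ ^ p - (1 / q) * ∫ x, |ιq φ x| ^ q ∂μm = d)
    (hmin : ∀ u : V, u ≠ 0 → ‖u‖ ^ p = ∫ x, |ιq u x| ^ q ∂μm →
      d ≤ (1 / p) * ‖u‖ ^ p - (1 / q) * ∫ x, |ιq u x| ^ q ∂μm) :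
    sInf {r : ℝ | ∃ u : V,
        (∫ x, |ιq u x| ^ q ∂μm) = (∫ x, |ιq φ x| ^ q ∂μm) ∧ r = ‖u‖ ^ p}
      = ‖φ‖ ^ p := by
  have hp0 : (0:ℝ) < p := lt_trans one_pos hp
  have hq0 : (0:ℝ) < q := lt_trans hp0 hpq
  have hφpos : 0 < ‖φ‖ := norm_pos_iff.mpr hφ
  have hB : 0 < ‖φ‖ ^ p := Real.rpow_pos_of_pos hφpos p
  have hlb : ∀ r ∈ {r : ℝ | ∃ u : V,
      (∫ x, |ιq u x| ^ q ∂μm) = (∫ x, |ιq φ x| ^ q ∂μm) ∧ r = ‖u‖ ^ p},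
      ‖φ‖ ^ p ≤ r := by
    rintro r ⟨u, hu, rfl⟩
    rw [← hNehari] at hu
    have hu0 : u ≠ 0 := by
      rintro rfl
      have hc : (ιq (0:V) : X → ℝ) =ᵐ[μm] 0 := by
        rw [map_zero]; exact Lp.coeFn_zero ℝ _ μm
      have h0 : (fun x => |(ιq (0:V) : X → ℝ) x| ^ q) =ᵐ[μm] (fun _ => (0:ℝ)) := by
        filter_upwards [hc] with x hx
        simp only [Pi.zero_apply] at hx
        rw [hx, abs_zero, Real.zero_rpow hq0.ne']
      rw [integral_congr_ae h0, integral_zero] at hu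
      exact hB.ne' hu.symm
    have hupos : 0 < ‖u‖ := norm_pos_iff.mpr hu0
    have hA : 0 < ‖u‖ ^ p := Real.rpow_pos_of_pos hupos p
    set A := ‖u‖ ^ p with hAdef
    set B := ‖φ‖ ^ p with hBdef
    by_contra hcon
    push_neg at hcon
    have hqp : 0 < q - p := sub_pos.mpr hpq
    have hABpos : 0 < A / B := div_pos hA hB
    set lam := (A / B) ^ (1 / (q - p)) with hlam
    have hlampos : 0 < lam := Real.rpow_pos_of_pos hABpos _
    have hlamlt : lam < 1 :=
      Real.rpow_lt_one hABpos.le ((div_lt_one hB).mpr hcon) (by positivity)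
    have hlamp : lam ^ p < 1 := Real.rpow_lt_one hlampos.le hlamlt hp0
    set v := lam • u with hv
    have hvnorm : ‖v‖ ^ p = lam ^ p * A := by
      rw [hv, norm_smul, Real.norm_of_nonneg hlampos.le,
        Real.mul_rpow hlampos.le (norm_nonneg u)]
    have h1 : lam ^ (q - p) = A / B := by
      rw [hlam, ← Real.rpow_mul hABpos.le, one_div_mul_cancel hqp.ne', Real.rpow_one]
    have hkey : lam ^ q * B = lam ^ p * A := by
      have h2 : lam ^ q = lam ^ p * (A / B) := by
        rw [← h1, ← Real.rpow_add hlampos]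
        congr 1
        ring
      rw [h2]
      field_simp
    have hvint : (∫ x, |ιq v x| ^ q ∂μm) = lam ^ q * B := by
      have hcoe : (ιq v : X → ℝ) =ᵐ[μm] fun x => lam * ιq u x := by
        rw [hv, _root_.map_smul]
        filter_upwards [Lp.coeFn_smul lam (ιq u)] with x hx
        simpa [smul_eq_mul] using hx
      calc (∫ x, |ιq v x| ^ q ∂μm)
          = ∫ x, lam ^ q * |ιq u x| ^ q ∂μm := by
            refine integral_congr_ae ?_
            filter_upwards [hcoe] with x hx
            rw [hx, abs_mul, abs_of_pos hlampos,
              Real.mul_rpow hlampos.le (abs_nonneg _)]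
        _ = lam ^ q * ∫ x, |ιq u x| ^ q ∂μm := integral_const_mul _ _
        _ = lam ^ q * B := by rw [hu]
    have hvN : ‖v‖ ^ p = ∫ x, |ιq v x| ^ q ∂μm := by
      rw [hvnorm, hvint, hkey]
    have hd := hmin v (smul_ne_zero hlampos.ne' hu0) hvN
    rw [hvnorm, hvint, hkey] at hd
    have hd' : (1 / p) * B - (1 / q) * B = d := by
      rw [hNehari] at hφd ⊢
      exact hφd
    have hc : 0 < 1 / p - 1 / q := by
      rw [sub_pos]
      exact one_div_lt_one_div_of_lt hp0 hpq
    have hmul : (1 / p - 1 / q) * B ≤ (1 / p - 1 / q) * (lam ^ p * A) := by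
      nlinarith [hd, hd']
    have hBle : B ≤ lam ^ p * A := le_of_mul_le_mul_left hmul hc
    have hlt : lam ^ p * A < A := by nlinarith [hlamp, hA]
    linarith
  exact le_antisymm (csInf_le ⟨‖φ‖ ^ p, hlb⟩ ⟨φ, rfl, rfl⟩)
    (le_csInf ⟨‖φ‖ ^ p, φ, rfl, rfl⟩ hlb)
end
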